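/- There is a short exact sequence of compact abelian groups 0 → T(a) → T(t,x) → 𝕋² → 0, where the surjection is induced by the projection 𝕋² × T → 𝕋². Here T(a) = ⟨exp_T(x₁), exp_T(x₂)⟩ is the closed subgroup of T generated by exp_T(x₁) and exp_T(x₂). -/

import Mathlib

noncomputable section

/-- The circle `𝕋 = ℝ/ℤ`. -/
abbrev 𝕊 : Type := UnitAddCircle

/-- The compact torus of rank `n`. -/
abbrev Tor (n : ℕ) : Type := Fin n → 𝕊

/-- The exponential map `𝔱 = ℝⁿ → T = (ℝ/ℤ)ⁿ`. -/
def expT {n : ℕ} (x : Fin n → ℝ) : Tor n := fun i => (x i : 𝕊)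

/-- The two-parameter homomorphism `(r₁,r₂) ↦ (exp(r₁), exp(r₂), exp_T(x₁r₁ + x₂r₂))`
into `𝕋² × T`. -/
def onePar {n : ℕ} (x₁ x₂ : Fin n → ℝ) (r₁ r₂ : ℝ) : (𝕊 × 𝕊) × Tor n :=
  (((r₁ : 𝕊), (r₂ : 𝕊)), expT (r₁ • x₁ + r₂ • x₂))

/-- The closed subgroup `T(t,x) ⊆ 𝕋² × T`: the closure of
`{(exp(r₁), exp(r₂), exp_T(x₁r₁ + x₂r₂)) | r₁, r₂ ∈ ℝ}`. -/
def Ttx {n : ℕ} (x₁ x₂ : Fin n → ℝ) : AddSubgroup ((𝕊 × 𝕊) × Tor n) :=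
  (AddSubgroup.closure (Set.range fun p : ℝ × ℝ => onePar x₁ x₂ p.1 p.2)).topologicalClosure

/-- The closed subgroup `T(a) = ⟨exp_T(x₁), exp_T(x₂)⟩ ⊆ T`. -/
def Ta {n : ℕ} (x₁ x₂ : Fin n → ℝ) : AddSubgroup (Tor n) :=
  (AddSubgroup.closure ({expT x₁, expT x₂} : Set (Tor n))).topologicalClosure

/-- expT as a hom. -/
def expTHom (n : ℕ) : (Fin n → ℝ) →+ Tor n where
  toFun := expT
  map_zero' := by funext i; simp [expT]
  map_add' := fun x y => by funext i; simp [expT]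

lemma expT_eq {n : ℕ} (x : Fin n → ℝ) : expT x = expTHom n x := rfl

/-- onePar as a hom. -/
def F {n : ℕ} (x₁ x₂ : Fin n → ℝ) : (ℝ × ℝ) →+ (𝕊 × 𝕊) × Tor n where
  toFun := fun p => onePar x₁ x₂ p.1 p.2
  map_zero' := by
    simp [onePar, expT_eq, AddCircle.coe_eq_zero_iff]
  map_add' := fun p q => by
    simp only [onePar, expT_eq, Prod.mk_add_mk, Prod.fst_add, Prod.snd_add]
    rw [Prod.mk.injEq, Prod.mk.injEq]
    refine ⟨⟨?_, ?_⟩, ?_⟩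
    · rfl
    · rfl
    · rw [← map_add]; congr 1; module

lemma intCast_coe_zero (m : ℤ) : ((m : ℝ) : 𝕊) = 0 := by
  rw [AddCircle.coe_eq_zero_iff]; exact ⟨m, by simp⟩

lemma F_int {n : ℕ} (x₁ x₂ : Fin n → ℝ) (m k : ℤ) :
    F x₁ x₂ ((m : ℝ), (k : ℝ)) = ((0, 0), m • expT x₁ + k • expT x₂) := by
  show onePar x₁ x₂ _ _ = _
  rw [onePar, intCast_coe_zero, intCast_coe_zero]
  congr 1
  rw [expT_eq, expT_eq, expT_eq, map_add]
  congr 1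
  · rw [← map_zsmul]; congr 1; ext i
    simp [Pi.smul_apply, smul_eq_mul, zsmul_eq_mul]
  · rw [← map_zsmul]; congr 1; ext i
    simp [Pi.smul_apply, smul_eq_mul, zsmul_eq_mul]

lemma mem_closure_pair {G : Type*} [AddCommGroup G] {a b d : G}
    (h : d ∈ AddSubgroup.closure ({a, b} : Set G)) :
    ∃ m k : ℤ, d = m • a + k • b := by
  induction h using AddSubgroup.closure_induction with
  | mem z hz =>
    rcases hz with rfl | rfl
    · exact ⟨1, 0, by simp⟩
    · exact ⟨0, 1, by simp⟩
  | zero => exact ⟨0, 0, by simp⟩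
  | add y z _ _ hy hz =>
    obtain ⟨m, k, rfl⟩ := hy; obtain ⟨m', k', rfl⟩ := hz
    exact ⟨m + m', k + k', by rw [add_zsmul, add_zsmul]; abel⟩
  | neg y _ hy =>
    obtain ⟨m, k, rfl⟩ := hy
    exact ⟨-m, -k, by rw [neg_zsmul, neg_zsmul]; abel⟩

lemma inr_mem_range {n : ℕ} (x₁ x₂ : Fin n → ℝ) {d : Tor n}
    (hd : d ∈ AddSubgroup.closure ({expT x₁, expT x₂} : Set (Tor n))) :
    ((0, 0), d) ∈ (F x₁ x₂).range := by
  obtain ⟨m, k, rfl⟩ := mem_closure_pair hd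
  exact ⟨((m : ℝ), (k : ℝ)), (F_int x₁ x₂ m k)⟩

lemma Ttx_eq {n : ℕ} (x₁ x₂ : Fin n → ℝ) :
    Ttx x₁ x₂ = (F x₁ x₂).range.topologicalClosure := by
  unfold Ttx
  congr 1
  have h : (Set.range fun p : ℝ × ℝ => onePar x₁ x₂ p.1 p.2)
      = ((F x₁ x₂).range : Set ((𝕊 × 𝕊) × Tor n)) := rfl
  rw [h, AddSubgroup.closure_eq]

lemma continuous_F {n : ℕ} (x₁ x₂ : Fin n → ℝ) : Continuous (F x₁ x₂) := by
  refine Continuous.prodMk (Continuous.prodMk ?_ ?_) ?_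
  · exact (AddCircle.continuous_mk' 1).comp continuous_fst
  · exact (AddCircle.continuous_mk' 1).comp continuous_snd
  · refine continuous_pi fun i => (AddCircle.continuous_mk' 1).comp ?_
    show Continuous fun p : ℝ × ℝ => (p.1 • x₁ + p.2 • x₂) i
    simp only [Pi.add_apply, Pi.smul_apply, smul_eq_mul]
    fun_prop

/-- Key structural description of `Ttx`. -/
lemma mem_Ttx_iff {n : ℕ} (x₁ x₂ : Fin n → ℝ) (z : (𝕊 × 𝕊) × Tor n) :
    z ∈ Ttx x₁ x₂ ↔ ∃ p : ℝ × ℝ, ∃ c ∈ Ta x₁ x₂, z = F x₁ x₂ p + ((0, 0), c) := by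
  rw [Ttx_eq]
  change z ∈ closure (Set.range (F x₁ x₂)) ↔ _
  constructor
  · intro hz
    -- the RHS set is closed (image of a compact set) and contains the range
    set Φ : (ℝ × ℝ) × Tor n → (𝕊 × 𝕊) × Tor n := fun q => F x₁ x₂ q.1 + ((0, 0), q.2) with hΦ
    have hΦc : Continuous Φ := by
      refine Continuous.add ?_ ?_
      · exact (continuous_F x₁ x₂).comp continuous_fst
      · exact Continuous.prodMk continuous_const continuous_snd
    have hcompact : IsCompact ((Set.Icc (0:ℝ) 1 ×ˢ Set.Icc (0:ℝ) 1) ×ˢ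
        ((Ta x₁ x₂ : Set (Tor n)))) := by
      refine IsCompact.prod (IsCompact.prod isCompact_Icc isCompact_Icc) ?_
      exact (isClosed_closure.isCompact)
    have himg : IsClosed (Φ '' ((Set.Icc (0:ℝ) 1 ×ˢ Set.Icc (0:ℝ) 1) ×ˢ
        ((Ta x₁ x₂ : Set (Tor n))))) :=
      (hcompact.image hΦc).isClosed
    have hsub : Set.range (F x₁ x₂) ⊆ Φ '' ((Set.Icc (0:ℝ) 1 ×ˢ Set.Icc (0:ℝ) 1) ×ˢ
        ((Ta x₁ x₂ : Set (Tor n)))) := by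
      rintro _ ⟨⟨a, b⟩, rfl⟩
      refine ⟨((Int.fract a, Int.fract b), (⌊a⌋ • expT x₁ + ⌊b⌋ • expT x₂)), ?_, ?_⟩
      · refine ⟨⟨⟨(Int.fract_nonneg a), (Int.fract_lt_one a).le⟩,
          ⟨(Int.fract_nonneg b), (Int.fract_lt_one b).le⟩⟩, ?_⟩
        refine AddSubgroup.le_topologicalClosure _ ?_
        exact AddSubgroup.add_mem _
          (AddSubgroup.zsmul_mem _ (AddSubgroup.subset_closure (by simp)) _)
          (AddSubgroup.zsmul_mem _ (AddSubgroup.subset_closure (by simp)) _)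
      · show F x₁ x₂ (Int.fract a, Int.fract b) + ((0,0), ⌊a⌋ • expT x₁ + ⌊b⌋ • expT x₂)
            = F x₁ x₂ (a, b)
        rw [← F_int x₁ x₂ ⌊a⌋ ⌊b⌋, ← map_add]
        congr 1
        rw [Prod.mk_add_mk, Prod.mk.injEq]
        exact ⟨Int.fract_add_floor a, Int.fract_add_floor b⟩
    have := closure_minimal hsub himg hz
    obtain ⟨⟨p, c⟩, ⟨_, hc⟩, rfl⟩ := this
    exact ⟨p, c, hc, rfl⟩
  · rintro ⟨p, c, hc, rfl⟩
    -- c is a limit of elements of the finitely generated subgroup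
    have hmap : Set.MapsTo (fun d : Tor n => F x₁ x₂ p + ((0, 0), d))
        (AddSubgroup.closure ({expT x₁, expT x₂} : Set (Tor n)) : Set (Tor n))
        (Set.range (F x₁ x₂)) := by
      intro d hd
      obtain ⟨q, hq⟩ := inr_mem_range x₁ x₂ hd
      exact ⟨p + q, by rw [map_add, hq]⟩
    have hcont : Continuous (fun d : Tor n => F x₁ x₂ p + ((0, 0), d)) :=
      Continuous.add continuous_const (Continuous.prodMk continuous_const continuous_id)
    exact map_mem_closure (f := fun d : Tor n => F x₁ x₂ p + ((0, 0), d)) hcont hc hmap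

/-- There is a short exact sequence of compact abelian groups
`0 → T(a) → T(t,x) → 𝕋² → 0`, the surjection being induced by the projection
`𝕋² × T → 𝕋²` and `T(a) = ⟨exp_T(x₁), exp_T(x₂)⟩` sitting inside `T(t,x)` via `{0} × T`. -/
theorem stmt_11 {n : ℕ} (t₁ t₂ : ℂ) (ht₂ : t₂ ≠ 0) (him : 0 < (t₁ / t₂).im)
    (x₁ x₂ : Fin n → ℝ) :
    AddSubgroup.map (AddMonoidHom.fst (𝕊 × 𝕊) (Tor n)) (Ttx x₁ x₂) = ⊤ ∧
    Ttx x₁ x₂ ⊓ (AddMonoidHom.fst (𝕊 × 𝕊) (Tor n)).ker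
      = AddSubgroup.map (AddMonoidHom.inr (𝕊 × 𝕊) (Tor n)) (Ta x₁ x₂) := by
  constructor
  · rw [eq_top_iff]
    rintro ⟨s₁, s₂⟩ -
    obtain ⟨a, rfl⟩ := QuotientAddGroup.mk_surjective s₁
    obtain ⟨b, rfl⟩ := QuotientAddGroup.mk_surjective s₂
    exact ⟨F x₁ x₂ (a, b),
      (mem_Ttx_iff x₁ x₂ _).mpr ⟨(a, b), 0, (Ta x₁ x₂).zero_mem, by simp⟩, rfl⟩
  · ext z
    simp only [AddSubgroup.mem_inf, AddMonoidHom.mem_ker, AddSubgroup.mem_map]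
    constructor
    · rintro ⟨hz, hker⟩
      rw [mem_Ttx_iff] at hz
      obtain ⟨⟨a, b⟩, c, hc, rfl⟩ := hz
      have h1 : ((a : 𝕊), (b : 𝕊)) = (0 : 𝕊 × 𝕊) := by
        simpa [F, onePar] using hker
      rw [Prod.ext_iff] at h1
      obtain ⟨m, hm⟩ := (AddCircle.coe_eq_zero_iff (1:ℝ)).mp h1.1
      obtain ⟨k, hk⟩ := (AddCircle.coe_eq_zero_iff (1:ℝ)).mp h1.2
      simp only [zsmul_eq_mul, smul_eq_mul, mul_one] at hm hk
      refine ⟨m • expT x₁ + k • expT x₂ + c, ?_, ?_⟩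
      · refine AddSubgroup.add_mem _ ?_ hc
        refine AddSubgroup.le_topologicalClosure _ ?_
        exact AddSubgroup.add_mem _
          (AddSubgroup.zsmul_mem _ (AddSubgroup.subset_closure (by simp)) _)
          (AddSubgroup.zsmul_mem _ (AddSubgroup.subset_closure (by simp)) _)
      · have : F x₁ x₂ (a, b) = ((0, 0), m • expT x₁ + k • expT x₂) := by
          rw [← hm, ← hk]; exact F_int x₁ x₂ m k
        rw [this]
        simp [AddMonoidHom.inr, Prod.ext_iff]
    · rintro ⟨c, hc, rfl⟩
      refine ⟨?_, rfl⟩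
      rw [mem_Ttx_iff]
      refine ⟨(0, 0), c, hc, ?_⟩
      rw [show ((0:ℝ), (0:ℝ)) = (0 : ℝ × ℝ) from rfl, map_zero, zero_add]
      rfl
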